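/- Let M > 0 and σ < 0 be real numbers, and let T > 0 with T ≤ -2σ/√M. Suppose s : [0,T) → ℝ is differentiable, satisfies s'(t) ≤ -(1/2) s(t)² + (1/2) M for all t ∈ [0,T), and s(0) ≤ √M · coth(σ). Then for every t ∈ [0,T) one has s(t) ≤ √M · coth(σ + (t/2)√M). -/

import Mathlib

open Set

/-- Hyperbolic cotangent. -/
noncomputable def coth (x : ℝ) : ℝ := Real.cosh x / Real.sinh x

lemma coth_hasDerivAt {x : ℝ} (hx : Real.sinh x ≠ 0) :
    HasDerivAt coth (-1 / Real.sinh x ^ 2) x := by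
  have h := (Real.hasDerivAt_cosh x).div (Real.hasDerivAt_sinh x) hx
  convert h using 1 <;> try rfl
  have hc : Real.cosh x ^ 2 = Real.sinh x ^ 2 + 1 := Real.cosh_sq x
  field_simp
  nlinarith [hc]

lemma coth_strictAntiOn : StrictAntiOn coth (Iio (0:ℝ)) := by
  have hne : ∀ x : ℝ, x < 0 → Real.sinh x ≠ 0 := fun x hx =>
    ne_of_lt (by simpa using Real.sinh_lt_sinh.2 hx)
  apply strictAntiOn_of_deriv_neg (convex_Iio 0)
  · exact fun x hx => (coth_hasDerivAt (hne x hx)).continuousAt.continuousWithinAt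
  · intro x hx
    rw [interior_Iio] at hx
    rw [(coth_hasDerivAt (hne x hx)).deriv]
    have : 0 < Real.sinh x ^ 2 := pow_two_pos_of_ne_zero (hne x hx)
    exact div_neg_of_neg_of_pos (by norm_num) this

/-- Riccati comparison: under `s' ≤ -s²/2 + M/2` with sufficiently negative
initial data `s 0 ≤ √M coth σ`, the slope is dominated by the coth supersolution
on `[0, T)` for `T ≤ -2σ/√M`. -/
theorem slope_le_coth_supersolution
    (M σ T : ℝ) (hM : 0 < M) (hσ : σ < 0) (hT : 0 < T)
    (hT' : T ≤ -2 * σ / Real.sqrt M)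
    (s s' : ℝ → ℝ)
    (hderiv : ∀ t ∈ Set.Ico (0 : ℝ) T, HasDerivWithinAt s (s' t) (Set.Ico 0 T) t)
    (hineq : ∀ t ∈ Set.Ico (0 : ℝ) T, s' t ≤ -(1/2) * (s t)^2 + (1/2) * M)
    (h0 : s 0 ≤ Real.sqrt M * coth σ) :
    ∀ t ∈ Set.Ico (0 : ℝ) T,
      s t ≤ Real.sqrt M * coth (σ + (t / 2) * Real.sqrt M) := by
  have hsM : 0 < Real.sqrt M := Real.sqrt_pos.2 hM
  have hMsq : Real.sqrt M * Real.sqrt M = M := Real.mul_self_sqrt hM.le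
  have hTsM : T * Real.sqrt M ≤ -2 * σ := (le_div_iff₀ hsM).1 hT'
  intro t ht
  obtain ⟨ht0, htT⟩ := ht
  set u : ℝ → ℝ := fun x => σ + x / 2 * Real.sqrt M with hu_def
  have hu_neg : ∀ x, x < T → u x < 0 := by
    intro x hx
    have : x * Real.sqrt M < T * Real.sqrt M := mul_lt_mul_of_pos_right hx hsM
    simp only [hu_def]
    nlinarith
  have hu_mono : ∀ ⦃x y : ℝ⦄, x < y → u x < u y := by
    intro x y hxy
    simp only [hu_def]
    nlinarith [mul_lt_mul_of_pos_right hxy hsM]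
  have hsinh_ne : ∀ x, x < T → Real.sinh (u x) ≠ 0 := fun x hx =>
    ne_of_lt (by simpa using Real.sinh_lt_sinh.2 (hu_neg x hx))
  set K : ℝ := -(Real.sqrt M * coth (u t)) with hK_def
  -- derivative of u
  have hu_deriv : ∀ x : ℝ, HasDerivAt u (Real.sqrt M / 2) x := by
    intro x
    have h1 : HasDerivAt (fun x : ℝ => x / 2 * Real.sqrt M) (1 / 2 * Real.sqrt M) x := by
      simpa using (((hasDerivAt_id x).div_const 2).mul_const (Real.sqrt M))
    have := h1.const_add σ
    convert this using 1 <;> try rfl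
    ring
  have key : ∀ ε > 0, s t ≤ Real.sqrt M * coth (u t) + ε * Real.exp (K * t) := by
    intro ε hε
    set B : ℝ → ℝ := fun x => Real.sqrt M * coth (u x) + ε * Real.exp (K * x) with hB_def
    set B' : ℝ → ℝ := fun x =>
      Real.sqrt M * (-1 / Real.sinh (u x) ^ 2 * (Real.sqrt M / 2)) +
        ε * (Real.exp (K * x) * K) with hB'_def
    have hB_deriv : ∀ x, x < T → HasDerivAt B (B' x) x := by
      intro x hx
      have h1 : HasDerivAt (fun y => coth (u y)) (-1 / Real.sinh (u x) ^ 2 * (Real.sqrt M / 2)) x :=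
        (coth_hasDerivAt (hsinh_ne x hx)).comp x (hu_deriv x)
      have h2 : HasDerivAt (fun y : ℝ => Real.exp (K * y)) (Real.exp (K * x) * K) x := by
        have := ((hasDerivAt_id x).const_mul K).exp
        simpa [mul_comm] using this
      exact (h1.const_mul (Real.sqrt M)).add (h2.const_mul ε)
    have hIccT : Icc (0:ℝ) t ⊆ Ico 0 T := fun x hx => ⟨hx.1, lt_of_le_of_lt hx.2 htT⟩
    have hf : ContinuousOn s (Icc 0 t) := fun x hx =>
      ((hderiv x (hIccT hx)).continuousWithinAt).mono hIccT
    have hf' : ∀ x ∈ Ico (0:ℝ) t, HasDerivWithinAt s (s' x) (Ici x) x := by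
      intro x hx
      have hxT : x ∈ Ico (0:ℝ) T := ⟨hx.1, hx.2.trans htT⟩
      refine (hderiv x hxT).mono_of_mem_nhdsWithin ?_
      rw [mem_nhdsWithin]
      exact ⟨Iio T, isOpen_Iio, hxT.2, fun y hy => ⟨hxT.1.trans hy.2, hy.1⟩⟩
    have ha : s 0 ≤ B 0 := by
      have hu0 : u 0 = σ := by simp [hu_def]
      have : (0:ℝ) < ε * Real.exp (K * 0) := by positivity
      simp only [hB_def, hu0]
      linarith
    have hB : ContinuousOn B (Icc 0 t) := fun x hx =>
      (hB_deriv x (lt_of_le_of_lt hx.2 htT)).continuousAt.continuousWithinAt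
    have hB' : ∀ x ∈ Ico (0:ℝ) t, HasDerivWithinAt B (B' x) (Ici x) x := fun x hx =>
      (hB_deriv x (hx.2.trans htT)).hasDerivWithinAt
    have bound : ∀ x ∈ Ico (0:ℝ) t, s x = B x → s' x < B' x := by
      intro x hx heq
      have hxT : x ∈ Ico (0:ℝ) T := ⟨hx.1, hx.2.trans htT⟩
      have hineq' := hineq x hxT
      have hc : coth (u t) < coth (u x) :=
        coth_strictAntiOn (mem_Iio.2 (hu_neg x hxT.2)) (mem_Iio.2 (hu_neg t htT))
          (hu_mono hx.2)
      have he : 0 < ε * Real.exp (K * x) := by positivity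
      have hsinh : Real.sinh (u x) ≠ 0 := hsinh_ne x hxT.2
      have hid : -1 / Real.sinh (u x) ^ 2 = 1 - coth (u x) ^ 2 := by
        have hc2 : Real.cosh (u x) ^ 2 = Real.sinh (u x) ^ 2 + 1 := Real.cosh_sq (u x)
        simp only [coth]
        field_simp
        nlinarith [hc2]
      rw [heq] at hineq'
      simp only [hB_def] at hineq'
      have hprod : (ε * Real.exp (K * x)) * (-(Real.sqrt M * coth (u x))) <
          (ε * Real.exp (K * x)) * K :=
        mul_lt_mul_of_pos_left
          (by rw [hK_def]; exact neg_lt_neg (mul_lt_mul_of_pos_left hc hsM)) he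
      have e2 : (Real.sqrt M * coth (u x) + ε * Real.exp (K * x)) ^ 2 =
          M * coth (u x) ^ 2 + 2 * (Real.sqrt M * coth (u x)) * (ε * Real.exp (K * x)) +
            (ε * Real.exp (K * x)) ^ 2 := by
        linear_combination coth (u x) ^ 2 * hMsq
      rw [e2] at hineq'
      simp only [hB'_def, hid]
      have e1 : Real.sqrt M * ((1 - coth (u x) ^ 2) * (Real.sqrt M / 2)) =
          M / 2 - M / 2 * coth (u x) ^ 2 := by
        linear_combination (1 - coth (u x) ^ 2) / 2 * hMsq
      rw [e1]
      nlinarith [hprod, sq_nonneg (ε * Real.exp (K * x)), hineq']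
    have := image_le_of_deriv_right_lt_deriv_boundary' hf hf' ha hB hB' bound
      (right_mem_Icc.2 ht0)
    simpa only [hB_def] using this
  have : s t ≤ Real.sqrt M * coth (u t) := by
    refine le_of_forall_pos_le_add fun ε hε => ?_
    have h := key (ε / Real.exp (K * t)) (div_pos hε (Real.exp_pos _))
    rwa [div_mul_cancel₀ _ (Real.exp_pos _).ne'] at h
  simpa only [hu_def] using this
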